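/- Let B be an m×n matrix, M an m×m SPD matrix, and A₁ an n×n SPD matrix such that uᵀBᵀM⁻¹Bu ≤ C_K · uᵀA₁u for all u ∈ ℝⁿ (a discrete Korn-type inequality) and pᵀBA₁⁻¹Bᵀp ≥ β²pᵀMp for all p ⊥ Null(Bᵀ) (inf-sup). Then the eigenvalues of (M restricted to Null(Bᵀ)^⊥)⁻¹(BA₁⁻¹Bᵀ restricted to Null(Bᵀ)^⊥) lie in [β², C_K]; i.e., β² pᵀMp ≤ pᵀBA₁⁻¹Bᵀp ≤ C_K pᵀMp for all p ⊥ Null(Bᵀ). -/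

import Mathlib

open Matrix

lemma dot_symm_aux {m : ℕ} (N : Matrix (Fin m) (Fin m) ℝ) (hN : Nᵀ = N)
    (x y : Fin m → ℝ) : x ⬝ᵥ (N *ᵥ y) = y ⬝ᵥ (N *ᵥ x) := by
  have h : x ⬝ᵥ (N *ᵥ y) = (Nᵀ *ᵥ x) ⬝ᵥ y := by
    rw [dotProduct_mulVec, ← mulVec_transpose]
  rw [h, hN, dotProduct_comm]

lemma cs_aux {m : ℕ} (N : Matrix (Fin m) (Fin m) ℝ) (hN : N.PosSemidef)
    (x y : Fin m → ℝ) :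
    (x ⬝ᵥ (N *ᵥ y)) ^ 2 ≤ (x ⬝ᵥ (N *ᵥ x)) * (y ⬝ᵥ (N *ᵥ y)) := by
  have hsym : Nᵀ = N := by
    have := hN.1.eq
    simpa using this
  have key : ∀ t : ℝ, 0 ≤ (y ⬝ᵥ (N *ᵥ y)) * (t * t) + (2 * (x ⬝ᵥ (N *ᵥ y))) * t
      + (x ⬝ᵥ (N *ᵥ x)) := by
    intro t
    have h0 := hN.dotProduct_mulVec_nonneg (x + t • y)
    have hx : star (x + t • y) = x + t • y := by simp
    rw [hx] at h0
    have hexp : (x + t • y) ⬝ᵥ (N *ᵥ (x + t • y)) =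
        (y ⬝ᵥ (N *ᵥ y)) * (t * t) + (2 * (x ⬝ᵥ (N *ᵥ y))) * t + (x ⬝ᵥ (N *ᵥ x)) := by
      have hyx : y ⬝ᵥ (N *ᵥ x) = x ⬝ᵥ (N *ᵥ y) := dot_symm_aux N hsym y x
      simp [mulVec_add, mulVec_smul, dotProduct_add, add_dotProduct,
        dotProduct_smul, smul_dotProduct, smul_eq_mul, hyx]
      ring
    rw [hexp] at h0
    exact h0
  have hd := discrim_le_zero (a := y ⬝ᵥ (N *ᵥ y)) (b := 2 * (x ⬝ᵥ (N *ᵥ y)))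
    (c := x ⬝ᵥ (N *ᵥ x)) key
  rw [discrim] at hd
  nlinarith [hd]

/-- Two-sided spectral equivalence of the mass matrix and the pressure Schur
complement: if `uᵀBᵀM⁻¹Bu ≤ C_K uᵀA₁u` for all `u` (discrete Korn inequality)
and `β² pᵀMp ≤ pᵀBA₁⁻¹Bᵀp` for all `p ⊥ Null(Bᵀ)` (inf-sup), then
`β² pᵀMp ≤ pᵀBA₁⁻¹Bᵀp ≤ C_K pᵀMp` for all `p ⊥ Null(Bᵀ)`. -/
theorem stmt19 {m n : ℕ} (B : Matrix (Fin m) (Fin n) ℝ)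
    (M : Matrix (Fin m) (Fin m) ℝ) (A₁ : Matrix (Fin n) (Fin n) ℝ)
    (hM : M.PosDef) (hA : A₁.PosDef) (CK β : ℝ) (hβ : 0 < β)
    (hKorn : ∀ u : Fin n → ℝ,
      u ⬝ᵥ ((Bᵀ * M⁻¹ * B) *ᵥ u) ≤ CK * (u ⬝ᵥ (A₁ *ᵥ u)))
    (hinfsup : ∀ p : Fin m → ℝ, (∀ q : Fin m → ℝ, Bᵀ *ᵥ q = 0 → p ⬝ᵥ q = 0) →
      β ^ 2 * (p ⬝ᵥ (M *ᵥ p)) ≤ p ⬝ᵥ ((B * A₁⁻¹ * Bᵀ) *ᵥ p)) :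
    ∀ p : Fin m → ℝ, (∀ q : Fin m → ℝ, Bᵀ *ᵥ q = 0 → p ⬝ᵥ q = 0) →
      β ^ 2 * (p ⬝ᵥ (M *ᵥ p)) ≤ p ⬝ᵥ ((B * A₁⁻¹ * Bᵀ) *ᵥ p) ∧
      p ⬝ᵥ ((B * A₁⁻¹ * Bᵀ) *ᵥ p) ≤ CK * (p ⬝ᵥ (M *ᵥ p)) := by
  intro p hp
  refine ⟨hinfsup p hp, ?_⟩
  have hMsym : Mᵀ = M := by have := hM.1.eq; simpa using this
  have hAsym : A₁ᵀ = A₁ := by have := hA.1.eq; simpa using this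
  have hMinv : (M⁻¹).PosDef := hM.inv
  have hMinvsym : (M⁻¹)ᵀ = M⁻¹ := by have := hMinv.1.eq; simpa using this
  have hAunit : IsUnit A₁.det := isUnit_iff_ne_zero.mpr (ne_of_gt hA.det_pos)
  have hMunit : IsUnit M.det := isUnit_iff_ne_zero.mpr (ne_of_gt hM.det_pos)
  set u : Fin n → ℝ := A₁⁻¹ *ᵥ (Bᵀ *ᵥ p) with hu
  set s : ℝ := p ⬝ᵥ ((B * A₁⁻¹ * Bᵀ) *ᵥ p) with hs
  -- A₁ *ᵥ u = Bᵀ *ᵥ p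
  have hA1u : A₁ *ᵥ u = Bᵀ *ᵥ p := by
    rw [hu, mulVec_mulVec, Matrix.mul_nonsing_inv A₁ hAunit, one_mulVec]
  -- s = p ⬝ᵥ (B *ᵥ u)
  have hsBu : s = p ⬝ᵥ (B *ᵥ u) := by
    rw [hs, hu, ← mulVec_mulVec, ← mulVec_mulVec]
  -- u ⬝ᵥ A₁ u = s
  have huAu : u ⬝ᵥ (A₁ *ᵥ u) = s := by
    rw [hA1u, dotProduct_mulVec, ← mulVec_transpose, transpose_transpose, dotProduct_comm,
      hsBu]
  -- Cauchy-Schwarz with N = M⁻¹, x = M *ᵥ p, y = B *ᵥ u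
  have hcs := cs_aux M⁻¹ hMinv.posSemidef (M *ᵥ p) (B *ᵥ u)
  have h1 : (M *ᵥ p) ⬝ᵥ (M⁻¹ *ᵥ (B *ᵥ u)) = p ⬝ᵥ (B *ᵥ u) := by
    rw [dotProduct_mulVec, ← mulVec_transpose, hMinvsym, mulVec_mulVec,
      Matrix.nonsing_inv_mul M hMunit, one_mulVec]
  have h2 : (M *ᵥ p) ⬝ᵥ (M⁻¹ *ᵥ (M *ᵥ p)) = p ⬝ᵥ (M *ᵥ p) := by
    rw [mulVec_mulVec, Matrix.nonsing_inv_mul M hMunit, one_mulVec, dotProduct_mulVec,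
      ← mulVec_transpose, hMsym, dotProduct_comm]
  have h3 : (B *ᵥ u) ⬝ᵥ (M⁻¹ *ᵥ (B *ᵥ u)) = u ⬝ᵥ ((Bᵀ * M⁻¹ * B) *ᵥ u) := by
    rw [← mulVec_mulVec, ← mulVec_mulVec, dotProduct_mulVec u, vecMul_transpose]
  rw [h1, h2, h3, ← hsBu] at hcs
  have hKu := hKorn u
  rw [huAu] at hKu
  -- s^2 ≤ (p⬝Mp) * (CK * s)
  have hMp0 : 0 ≤ p ⬝ᵥ (M *ᵥ p) := by
    have := hM.posSemidef.dotProduct_mulVec_nonneg p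
    simpa using this
  have hs0 : 0 ≤ s := le_trans (by positivity) (hinfsup p hp)
  have hβ2 : 0 < β ^ 2 := by positivity
  rcases eq_or_lt_of_le hs0 with h | h
  · have hpm : p ⬝ᵥ (M *ᵥ p) = 0 := by nlinarith [hinfsup p hp, hMp0, hβ2]
    rw [hpm, mul_zero]
    exact h.ge
  · nlinarith [hcs, hKu, hMp0, h]
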